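/- For every complex quaternion a ∈ ℚ there exists a unique x ∈ ℚ satisfying the four Moore–Penrose equations: axa = a, xax = x, (ax)† = ax, and (xa)† = xa. (This element is called the Moore–Penrose inverse a⁺ of a.) -/

import Mathlib

open Quaternion Complex

noncomputable section

/-- The Hermitian conjugate a† of a complex quaternion. -/
def hconj (a : ℍ[ℂ]) : ℍ[ℂ] :=
  ⟨(starRingEnd ℂ) a.re, -((starRingEnd ℂ) a.imI),
   -((starRingEnd ℂ) a.imJ), -((starRingEnd ℂ) a.imK)⟩

/-- Componentwise complex conjugation of a complex quaternion. -/
def cconj (a : ℍ[ℂ]) : ℍ[ℂ] :=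
  ⟨(starRingEnd ℂ) a.re, (starRingEnd ℂ) a.imI,
   (starRingEnd ℂ) a.imJ, (starRingEnd ℂ) a.imK⟩

/-- The "Hermitian norm" Σ aᵢ conj(aᵢ). -/
def qNc (a : ℍ[ℂ]) : ℂ :=
  a.re * (starRingEnd ℂ) a.re + a.imI * (starRingEnd ℂ) a.imI +
  a.imJ * (starRingEnd ℂ) a.imJ + a.imK * (starRingEnd ℂ) a.imK

/-- The quaternionic (complex-valued) norm Σ aᵢ². -/
def nQ (a : ℍ[ℂ]) : ℂ := a.re ^ 2 + a.imI ^ 2 + a.imJ ^ 2 + a.imK ^ 2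

@[simp] lemma hconj_re (a : ℍ[ℂ]) : (hconj a).re = (starRingEnd ℂ) a.re := rfl
@[simp] lemma hconj_imI (a : ℍ[ℂ]) : (hconj a).imI = -((starRingEnd ℂ) a.imI) := rfl
@[simp] lemma hconj_imJ (a : ℍ[ℂ]) : (hconj a).imJ = -((starRingEnd ℂ) a.imJ) := rfl
@[simp] lemma hconj_imK (a : ℍ[ℂ]) : (hconj a).imK = -((starRingEnd ℂ) a.imK) := rfl

@[simp] lemma cconj_re (a : ℍ[ℂ]) : (cconj a).re = (starRingEnd ℂ) a.re := rfl
@[simp] lemma cconj_imI (a : ℍ[ℂ]) : (cconj a).imI = (starRingEnd ℂ) a.imI := rfl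
@[simp] lemma cconj_imJ (a : ℍ[ℂ]) : (cconj a).imJ = (starRingEnd ℂ) a.imJ := rfl
@[simp] lemma cconj_imK (a : ℍ[ℂ]) : (cconj a).imK = (starRingEnd ℂ) a.imK := rfl

lemma hconj_mul (p q : ℍ[ℂ]) : hconj (p * q) = hconj q * hconj p := by
  ext <;> simp [Quaternion.re_mul, imI_mul, imJ_mul, imK_mul] <;> ring

lemma hconj_hconj (p : ℍ[ℂ]) : hconj (hconj p) = p := by
  ext <;> simp [hconj]

lemma hconj_one : hconj (1 : ℍ[ℂ]) = 1 := by
  ext <;> simp [hconj]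

lemma hconj_zero : hconj (0 : ℍ[ℂ]) = 0 := by
  ext <;> simp [hconj]

lemma hconj_smul (r : ℂ) (q : ℍ[ℂ]) : hconj (r • q) = (starRingEnd ℂ) r • hconj q := by
  ext <;> simp [Quaternion.re_smul, imI_smul, imJ_smul, imK_smul, smul_eq_mul]

lemma conj_qNc (a : ℍ[ℂ]) : (starRingEnd ℂ) (qNc a) = qNc a := by
  simp [qNc]; ring

lemma qNc_eq_zero {a : ℍ[ℂ]} (h : qNc a = 0) : a = 0 := by
  have h2 : qNc a = ((Complex.normSq a.re + Complex.normSq a.imI + Complex.normSq a.imJ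
      + Complex.normSq a.imK : ℝ) : ℂ) := by
    simp [qNc, Complex.mul_conj]
  rw [h2, Complex.ofReal_eq_zero] at h
  have h0 : Complex.normSq a.re = 0 ∧ Complex.normSq a.imI = 0 ∧ Complex.normSq a.imJ = 0
      ∧ Complex.normSq a.imK = 0 := by
    refine ⟨?_, ?_, ?_, ?_⟩ <;>
      nlinarith [Complex.normSq_nonneg a.re, Complex.normSq_nonneg a.imI,
        Complex.normSq_nonneg a.imJ, Complex.normSq_nonneg a.imK]
  ext <;> simp [Complex.normSq_eq_zero.mp h0.1, Complex.normSq_eq_zero.mp h0.2.1,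
    Complex.normSq_eq_zero.mp h0.2.2.1, Complex.normSq_eq_zero.mp h0.2.2.2]

lemma key1 (a : ℍ[ℂ]) : a * hconj a * a = (qNc a * 2) • a - nQ a • cconj a := by
  ext <;>
    simp [qNc, nQ, Quaternion.re_mul, imI_mul, imJ_mul, imK_mul,
      Quaternion.re_sub, imI_sub, imJ_sub, imK_sub, Quaternion.re_smul, imI_smul, imJ_smul,
      imK_smul, smul_eq_mul] <;> ring

lemma key2 (a : ℍ[ℂ]) : hconj a * a * hconj a
    = (qNc a * 2) • hconj a - (starRingEnd ℂ) (nQ a) • star a := by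
  ext <;>
    simp [qNc, nQ, Quaternion.re_mul, imI_mul, imJ_mul, imK_mul,
      Quaternion.re_sub, imI_sub, imJ_sub, imK_sub, Quaternion.re_smul, imI_smul, imJ_smul,
      imK_smul, re_star, imI_star, imJ_star, imK_star, smul_eq_mul] <;> ring

lemma nQ_eq (a : ℍ[ℂ]) : nQ a = normSq a := (Quaternion.normSq_def' a).symm

lemma qsmul_mul (r : ℂ) (p q : ℍ[ℂ]) : (r • p) * q = r • (p * q) := by
  ext <;>
    simp [Quaternion.re_mul, imI_mul, imJ_mul, imK_mul, Quaternion.re_smul, imI_smul,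
      imJ_smul, imK_smul, smul_eq_mul] <;> ring

lemma qmul_smul (r : ℂ) (p q : ℍ[ℂ]) : p * (r • q) = r • (p * q) := by
  ext <;>
    simp [Quaternion.re_mul, imI_mul, imJ_mul, imK_mul, Quaternion.re_smul, imI_smul,
      imJ_smul, imK_smul, smul_eq_mul] <;> ring

lemma qsmul_smul (r s : ℂ) (p : ℍ[ℂ]) : r • (s • p) = (r * s) • p := by
  ext <;>
    simp [Quaternion.re_smul, imI_smul, imJ_smul, imK_smul, smul_eq_mul] <;> ring

lemma qone_smul (p : ℍ[ℂ]) : (1 : ℂ) • p = p := by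
  ext <;> simp [Quaternion.re_smul, imI_smul, imJ_smul, imK_smul, smul_eq_mul]

lemma qzero_smul (p : ℍ[ℂ]) : (0 : ℂ) • p = 0 := by
  ext <;> simp [Quaternion.re_smul, imI_smul, imJ_smul, imK_smul, smul_eq_mul]

/-- Uniqueness of the Moore–Penrose inverse. -/
lemma mp_unique (a x y : ℍ[ℂ])
    (hx1 : a * x * a = a) (hx2 : x * a * x = x)
    (hx3 : hconj (a * x) = a * x) (hx4 : hconj (x * a) = x * a)
    (hy1 : a * y * a = a) (hy2 : y * a * y = y)
    (hy3 : hconj (a * y) = a * y) (hy4 : hconj (y * a) = y * a) : x = y := by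
  have h1 : hconj a = hconj a * (a * y) := by
    conv_lhs => rw [← hy1]
    rw [hconj_mul, hy3]
  have h2 : hconj a = (x * a) * hconj a := by
    conv_lhs => rw [← hx1]
    rw [mul_assoc, hconj_mul, hx4]
  have e1 : x = x * a * y := by
    calc x = x * a * x := hx2.symm
      _ = x * (a * x) := by rw [mul_assoc]
      _ = x * hconj (a * x) := by rw [hx3]
      _ = x * (hconj x * hconj a) := by rw [hconj_mul]
      _ = x * (hconj x * (hconj a * (a * y))) := by rw [← h1]
      _ = (x * (hconj x * hconj a)) * (a * y) := by simp only [mul_assoc]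
      _ = (x * hconj (a * x)) * (a * y) := by rw [hconj_mul]
      _ = (x * (a * x)) * (a * y) := by rw [hx3]
      _ = (x * a * x) * (a * y) := by simp only [mul_assoc]
      _ = x * (a * y) := by rw [hx2]
      _ = x * a * y := by rw [mul_assoc]
  have e2 : y = x * a * y := by
    calc y = y * a * y := hy2.symm
      _ = hconj (y * a) * y := by rw [hy4]
      _ = (hconj a * hconj y) * y := by rw [hconj_mul]
      _ = (((x * a) * hconj a) * hconj y) * y := by rw [← h2]
      _ = (x * a) * ((hconj a * hconj y) * y) := by simp only [mul_assoc]
      _ = (x * a) * (hconj (y * a) * y) := by rw [hconj_mul]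
      _ = (x * a) * ((y * a) * y) := by rw [hy4]
      _ = (x * a) * (y * a * y) := by simp only [mul_assoc]
      _ = (x * a) * y := by rw [hy2]
  rw [e1, ← e2]

theorem stmt_6 (a : ℍ[ℂ]) :
    ∃! x : ℍ[ℂ],
      a * x * a = a ∧ x * a * x = x ∧ hconj (a * x) = a * x ∧ hconj (x * a) = x * a := by
  have main : ∃ x : ℍ[ℂ],
      a * x * a = a ∧ x * a * x = x ∧ hconj (a * x) = a * x ∧ hconj (x * a) = x * a := by
    by_cases hn : nQ a = 0
    · by_cases ha : a = 0
      · refine ⟨0, ?_, ?_, ?_, ?_⟩ <;> simp [ha, hconj_zero]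
      · -- singular nonzero case: x = (2 qNc a)⁻¹ • hconj a
        have hq : qNc a ≠ 0 := fun h => ha (qNc_eq_zero h)
        have hq2 : qNc a * 2 ≠ 0 := by
          simp [hq]
        set c : ℂ := (qNc a * 2)⁻¹ with hc
        have hcc : (starRingEnd ℂ) c = c := by
          rw [hc, map_inv₀, map_mul, conj_qNc, map_ofNat]
        have hmul : c * (qNc a * 2) = 1 := inv_mul_cancel₀ hq2
        refine ⟨c • hconj a, ?_, ?_, ?_, ?_⟩
        · calc a * (c • hconj a) * a = c • (a * hconj a * a) := by
                rw [qmul_smul, qsmul_mul]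
            _ = c • ((qNc a * 2) • a - nQ a • cconj a) := by rw [key1]
            _ = c • ((qNc a * 2) • a) := by rw [hn, qzero_smul, sub_zero]
            _ = (c * (qNc a * 2)) • a := by rw [qsmul_smul]
            _ = a := by rw [hmul, qone_smul]
        · calc (c • hconj a) * a * (c • hconj a)
              = c • (c • (hconj a * a * hconj a)) := by
                rw [qsmul_mul, qsmul_mul, qmul_smul]
            _ = c • (c • ((qNc a * 2) • hconj a - (starRingEnd ℂ) (nQ a) • star a)) := by
                rw [key2]
            _ = c • (c • ((qNc a * 2) • hconj a)) := by rw [hn, map_zero, qzero_smul, sub_zero]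
            _ = c • ((c * (qNc a * 2)) • hconj a) := by rw [qsmul_smul, qsmul_smul, qsmul_smul, mul_assoc]
            _ = c • hconj a := by rw [hmul, qone_smul]
        · calc hconj (a * (c • hconj a)) = hconj (c • (a * hconj a)) := by rw [qmul_smul]
            _ = (starRingEnd ℂ) c • hconj (a * hconj a) := by rw [hconj_smul]
            _ = c • (hconj (hconj a) * hconj a) := by rw [hcc, hconj_mul]
            _ = c • (a * hconj a) := by rw [hconj_hconj]
            _ = a * (c • hconj a) := by rw [qmul_smul]
        · calc hconj ((c • hconj a) * a) = hconj (c • (hconj a * a)) := by rw [qsmul_mul]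
            _ = (starRingEnd ℂ) c • hconj (hconj a * a) := by rw [hconj_smul]
            _ = c • (hconj a * hconj (hconj a)) := by rw [hcc, hconj_mul]
            _ = c • (hconj a * a) := by rw [hconj_hconj]
            _ = (c • hconj a) * a := by rw [qsmul_mul]
    · -- invertible case: x = (nQ a)⁻¹ • star a
      set c : ℂ := (nQ a)⁻¹ with hc
      have hax : a * (c • star a) = 1 := by
        rw [qmul_smul, Quaternion.self_mul_star, ← nQ_eq]
        rw [show (↑(nQ a) : ℍ[ℂ]) = nQ a • (1 : ℍ[ℂ]) by
          rw [← Quaternion.coe_mul_eq_smul, mul_one]]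
        rw [qsmul_smul, hc, inv_mul_cancel₀ hn, qone_smul]
      have hxa : (c • star a) * a = 1 := by
        rw [qsmul_mul, Quaternion.star_mul_self, ← nQ_eq]
        rw [show (↑(nQ a) : ℍ[ℂ]) = nQ a • (1 : ℍ[ℂ]) by
          rw [← Quaternion.coe_mul_eq_smul, mul_one]]
        rw [qsmul_smul, hc, inv_mul_cancel₀ hn, qone_smul]
      refine ⟨c • star a, ?_, ?_, ?_, ?_⟩
      · rw [hax, one_mul]
      · rw [mul_assoc, hax, mul_one]
      · rw [hax, hconj_one]
      · rw [hxa, hconj_one]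
  obtain ⟨x, hx⟩ := main
  exact ⟨x, hx, fun y hy =>
    mp_unique a y x hy.1 hy.2.1 hy.2.2.1 hy.2.2.2 hx.1 hx.2.1 hx.2.2.1 hx.2.2.2⟩

end
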